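/- Let q > 0 and 1 ≤ r < 1.25. It is impossible to have 11 distinct points in the annulus {P : 1 ≤ |P| ≤ 1.25} with pairwise distances at least q = 1/1.409, because the minimal angular separation Φ_q(1, 1.25) at the origin between any two such points exceeds 360°/11. Formally: if X₁, …, X₁₁ are points with 1 ≤ |Xᵢ| ≤ 1.25 and dist(Xᵢ, Xⱼ) ≥ 1/1.409 for i ≠ j, a contradiction follows. -/

import Mathlib

open Real

private lemma numeric_cos_bound : (0.8389 : ℝ) < Real.cos (2 * π / 11) := by
  have hπu := Real.pi_lt_d6
  have hπl := Real.pi_gt_d6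
  have h2y : 2 * π / 11 = 2 * (π / 11) := by ring
  rw [h2y, Real.cos_two_mul]
  have hy1 : π / 11 ≤ 0.2857 := by linarith
  have hy0 : (0 : ℝ) ≤ π / 11 := by linarith
  have hcy : 1 - (π / 11) ^ 2 / 2 ≤ Real.cos (π / 11) :=
    Real.one_sub_sq_div_two_le_cos
  have h1 : (0.9591 : ℝ) ≤ Real.cos (π / 11) := by nlinarith
  nlinarith

private lemma poly_bound (r R : ℝ) (hr1 : 1 ≤ r) (hr2 : r ≤ 1.25)
    (hR1 : 1 ≤ R) (hR2 : R ≤ 1.25) :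
    r ^ 2 + R ^ 2 - (1 / 1.409) ^ 2 ≤ 2 * 0.8389 * (r * R) := by
  nlinarith [mul_nonneg (by linarith : (0:ℝ) ≤ 1.25 - r) (by linarith : (0:ℝ) ≤ 1.25 - R),
    mul_nonneg (by linarith : (0:ℝ) ≤ r - 1) (by linarith : (0:ℝ) ≤ R - 1),
    mul_nonneg (by linarith : (0:ℝ) ≤ 1.25 - r) (by linarith : (0:ℝ) ≤ R - 1),
    mul_nonneg (by linarith : (0:ℝ) ≤ r - 1) (by linarith : (0:ℝ) ≤ 1.25 - R),
    sq_nonneg (r - R), sq_nonneg (r + R)]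

/-- No 11 points with pairwise distances ≥ q = 1/1.409 in the annulus 1 ≤ ρ ≤ 1.25. -/
theorem stmt_5 :
    ¬ ∃ X : Fin 11 → EuclideanSpace ℝ (Fin 2),
      Function.Injective X ∧
      (∀ i, (1 : ℝ) ≤ ‖X i‖ ∧ ‖X i‖ ≤ 1.25) ∧
      (∀ i j, i ≠ j → (1 / 1.409 : ℝ) ≤ dist (X i) (X j)) := by
  rintro ⟨X, hinj, hnorm, hdist⟩
  set a : Fin 11 → ℝ := fun i => X i 0 with ha'
  set b : Fin 11 → ℝ := fun i => X i 1 with hb'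
  set r : Fin 11 → ℝ := fun i => ‖X i‖ with hr'
  have hr1 : ∀ i, 1 ≤ r i := fun i => (hnorm i).1
  have hr2 : ∀ i, r i ≤ 1.25 := fun i => (hnorm i).2
  have hrsq : ∀ i, r i ^ 2 = a i ^ 2 + b i ^ 2 := by
    intro i
    show ‖X i‖ ^ 2 = X i 0 ^ 2 + X i 1 ^ 2
    rw [EuclideanSpace.norm_eq, Real.sq_sqrt (by positivity)]
    simp [Fin.sum_univ_two, sq_abs]
  have hdsq : ∀ i j, i ≠ j →
      (1 / 1.409 : ℝ) ^ 2 ≤ (a i - a j) ^ 2 + (b i - b j) ^ 2 := by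
    intro i j hij
    have h1 : dist (X i) (X j) = Real.sqrt (∑ k, dist (X i k) (X j k) ^ 2) :=
      EuclideanSpace.dist_eq (X i) (X j)
    have h2 := hdist i j hij
    have h3 : (1 / 1.409 : ℝ) ^ 2 ≤ dist (X i) (X j) ^ 2 := by
      have : (0:ℝ) ≤ 1 / 1.409 := by norm_num
      nlinarith
    rw [h1, Real.sq_sqrt (by positivity)] at h3
    simpa [Fin.sum_univ_two, Real.dist_eq, sq_abs, ha', hb'] using h3
  -- the complex points and their arguments
  set z : Fin 11 → ℂ := fun i => ⟨a i, b i⟩ with hz'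
  have habs : ∀ i, ‖z i‖ = r i := by
    intro i
    rw [Complex.norm_def, Complex.normSq_mk]
    have : a i * a i + b i * b i = r i ^ 2 := by rw [hrsq i]; ring
    rw [this, Real.sqrt_sq (by linarith [hr1 i])]
  have hz0 : ∀ i, z i ≠ 0 := by
    intro i h
    have := habs i
    rw [h] at this
    simp at this
    linarith [hr1 i]
  set θ : Fin 11 → ℝ := fun i => Complex.arg (z i) with hθ'
  have hacos : ∀ i, a i = r i * Real.cos (θ i) := by
    intro i
    have h := Complex.cos_arg (hz0 i)
    rw [habs i] at h
    have hri : r i ≠ 0 := by linarith [hr1 i]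
    field_simp at h
    simpa [hθ', mul_comm] using h.symm
  have hbsin : ∀ i, b i = r i * Real.sin (θ i) := by
    intro i
    have h := Complex.sin_arg (z i)
    rw [habs i] at h
    have hri : r i ≠ 0 := by linarith [hr1 i]
    field_simp at h
    simpa [hθ', mul_comm] using h.symm
  have hθlb : ∀ i, -π < θ i := fun i => Complex.neg_pi_lt_arg (z i)
  have hθub : ∀ i, θ i ≤ π := fun i => Complex.arg_le_pi (z i)
  -- key pairwise cosine bound
  have key : ∀ i j, i ≠ j → Real.cos (θ i - θ j) ≤ 0.8389 := by
    intro i j hij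
    have h1 : a i * a j + b i * b j = r i * r j * Real.cos (θ i - θ j) := by
      rw [Real.cos_sub, hacos i, hacos j, hbsin i, hbsin j]; ring
    have h2 := hdsq i j hij
    have h3 := poly_bound (r i) (r j) (hr1 i) (hr2 i) (hr1 j) (hr2 j)
    have hpos : 0 < r i * r j := by nlinarith [hr1 i, hr1 j]
    have h4 : r i * r j * Real.cos (θ i - θ j) ≤ 0.8389 * (r i * r j) := by
      nlinarith [hrsq i, hrsq j]
    have h5 : r i * r j * Real.cos (θ i - θ j) ≤ r i * r j * 0.8389 := by linarith
    exact (mul_le_mul_iff_right₀ hpos).mp h5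
  -- the separation angle
  set Φ : ℝ := Real.arccos 0.8389 with hΦ'
  have hΦpos : 0 < Φ := Real.arccos_pos.2 (by norm_num)
  have hΦpi : Φ ≤ π := Real.arccos_le_pi _
  have hcosΦ : Real.cos Φ = 0.8389 := Real.cos_arccos (by norm_num) (by norm_num)
  have sep : ∀ i j, i ≠ j → Φ ≤ |θ i - θ j| ∧ |θ i - θ j| ≤ 2 * π - Φ := by
    intro i j hij
    have hc : Real.cos |θ i - θ j| ≤ Real.cos Φ := by
      rw [Real.cos_abs, hcosΦ]; exact key i j hij
    have habs0 : 0 ≤ |θ i - θ j| := abs_nonneg _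
    have hlt2π : |θ i - θ j| < 2 * π := by
      have := hθlb i; have := hθub i; have := hθlb j; have := hθub j
      rw [abs_sub_lt_iff]; constructor <;> linarith
    constructor
    · by_contra h
      push_neg at h
      have := Real.cos_lt_cos_of_nonneg_of_le_pi habs0 hΦpi h
      linarith
    · by_contra h
      push_neg at h
      have h5 : 2 * π - |θ i - θ j| < Φ := by linarith
      have h6 : 0 ≤ 2 * π - |θ i - θ j| := by linarith
      have h7 := Real.cos_lt_cos_of_nonneg_of_le_pi h6 hΦpi h5
      have h8 : Real.cos (2 * π - |θ i - θ j|) = Real.cos |θ i - θ j| := by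
        rw [Real.cos_sub, Real.cos_two_pi, Real.sin_two_pi]; ring
      rw [h8] at h7
      linarith
  -- sort the angles
  set σ := Tuple.sort θ with hσ'
  set g : Fin 11 → ℝ := θ ∘ σ with hg'
  have hmono : Monotone g := Tuple.monotone_sort θ
  have step : ∀ (k : ℕ) (h : k < 10),
      g ⟨k, by omega⟩ + Φ ≤ g ⟨k + 1, by omega⟩ := by
    intro k h
    have hne : σ ⟨k, by omega⟩ ≠ σ ⟨k + 1, by omega⟩ := by
      intro hc
      have := σ.injective hc
      simp only [Fin.mk.injEq] at this
      omega
    have h1 := (sep _ _ hne).1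
    have h2 : g ⟨k, by omega⟩ ≤ g ⟨k + 1, by omega⟩ :=
      hmono (Fin.mk_le_mk.mpr (by omega))
    have h3 : |g ⟨k, by omega⟩ - g ⟨k + 1, by omega⟩| ≥ Φ := h1
    rw [abs_sub_comm, abs_of_nonneg (by linarith)] at h3
    linarith
  have hchain : g ⟨0, by omega⟩ + 10 * Φ ≤ g ⟨10, by omega⟩ := by
    have h0 := step 0 (by omega)
    have h1 := step 1 (by omega)
    have h2 := step 2 (by omega)
    have h3 := step 3 (by omega)
    have h4 := step 4 (by omega)
    have h5 := step 5 (by omega)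
    have h6 := step 6 (by omega)
    have h7 := step 7 (by omega)
    have h8 := step 8 (by omega)
    have h9 := step 9 (by omega)
    linarith
  have hwrapne : σ ⟨0, by omega⟩ ≠ σ ⟨10, by omega⟩ := by
    intro hc
    have := σ.injective hc
    simp only [Fin.mk.injEq] at this
    omega
  have hwrap := (sep _ _ hwrapne).2
  have hle : g ⟨0, by omega⟩ ≤ g ⟨10, by omega⟩ := hmono (Fin.mk_le_mk.mpr (by omega))
  have hwrap' : g ⟨10, by omega⟩ - g ⟨0, by omega⟩ ≤ 2 * π - Φ := by
    have : |g ⟨0, by omega⟩ - g ⟨10, by omega⟩| ≤ 2 * π - Φ := hwrap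
    rw [abs_sub_comm, abs_of_nonneg (by linarith)] at this
    linarith
  have h11 : 11 * Φ ≤ 2 * π := by linarith
  have hΦle : Φ ≤ 2 * π / 11 := by linarith
  have h2π11 : 2 * π / 11 ≤ π := by
    have := Real.pi_pos; linarith
  have hfinal : Real.cos (2 * π / 11) ≤ Real.cos Φ :=
    Real.cos_le_cos_of_nonneg_of_le_pi (Real.arccos_nonneg _) h2π11 hΦle
  rw [hcosΦ] at hfinal
  linarith [numeric_cos_bound]
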